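/- Let g be a 3-Lie algebra and (V,ρ) a representation of g. The coboundary operator d on the generalized Chevalley–Eilenberg complex Cⁿ(g,V) = Hom(Λ^{2n+1}g, V), given by formula (7) of the paper, satisfies d∘d = 0. -/

import Mathlib

open Finset

/-- Remove the entries at positions `p < q` from a sequence. -/
def removePair {g : Type*} (p q : ℕ) (x : ℕ → g) : ℕ → g :=
  fun i => if i < p then x i else if i + 1 < q then x (i + 1) else x (i + 2)

/-- The coboundary operator `d_{n-1} : C^{n-1}(g,V) → C^n(g,V)` of formula (7), written with
0-indexed variables: a cochain in `C^{m}(g,V)` is viewed as a function of sequences `ℕ → g`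
depending only on the first `2m+1` entries. -/
def coboundary {K : Type*} [Field K] {g V : Type*} [AddCommGroup g] [Module K g]
    [AddCommGroup V] [Module K V]
    (ρ : g →ₗ[K] g →ₗ[K] Module.End K V) (b : g →ₗ[K] g →ₗ[K] g →ₗ[K] g)
    (n : ℕ) (ω : (ℕ → g) → V) : (ℕ → g) → V :=
  fun x =>
    ((-1 : ℤ) ^ (n + 1)) • ρ (x (2 * n)) (x (2 * n - 2)) (ω (removePair (2 * n - 2) (2 * n) x))
    + ((-1 : ℤ) ^ (n + 1)) • ρ (x (2 * n - 1)) (x (2 * n)) (ω (removePair (2 * n - 1) (2 * n) x))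
    + ∑ k ∈ range n,
        ((-1 : ℤ) ^ k) • ρ (x (2 * k)) (x (2 * k + 1)) (ω (removePair (2 * k) (2 * k + 1) x))
    + ∑ k ∈ range n, ∑ j ∈ Icc (2 * k + 2) (2 * n),
        ((-1 : ℤ) ^ (k + 1)) •
          ω (removePair (2 * k) (2 * k + 1)
              (Function.update x j (b (x (2 * k)) (x (2 * k + 1)) (x j))))

set_option linter.unusedSectionVars false

section Aux

variable {K : Type*} [Field K] {g V : Type*} [AddCommGroup g] [Module K g]
  [AddCommGroup V] [Module K V]

/-- prepend two entries to a sequence -/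
def tprep {g : Type*} (u v : g) (x : ℕ → g) : ℕ → g
  | 0 => u
  | 1 => v
  | (i+2) => x i

@[simp] lemma tprep_zero {u v : g} {x : ℕ → g} : tprep u v x 0 = u := rfl
@[simp] lemma tprep_one {u v : g} {x : ℕ → g} : tprep u v x 1 = v := rfl
@[simp] lemma tprep_add_two {u v : g} {x : ℕ → g} {i : ℕ} : tprep u v x (i+2) = x i := rfl

lemma tprep_reconstruct (x : ℕ → g) : tprep (x 0) (x 1) (fun i => x (i+2)) = x := by
  funext i
  match i with
  | 0 => rfl
  | 1 => rfl
  | (i+2) => rfl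

lemma removePair_tprep (p q : ℕ) (u v : g) (x : ℕ → g) :
    removePair (p+2) (q+2) (tprep u v x) = tprep u v (removePair p q x) := by
  funext i
  match i with
  | 0 => simp [removePair]
  | 1 => simp [removePair]
  | (i+2) =>
    simp only [removePair, tprep_add_two]
    split_ifs <;> first | rfl | omega

lemma removePair01_tprep (u v : g) (x : ℕ → g) :
    removePair 0 1 (tprep u v x) = x := by
  funext i; simp [removePair]

lemma update_tprep (u v : g) (x : ℕ → g) (j : ℕ) (w : g) :
    Function.update (tprep u v x) (j+2) w = tprep u v (Function.update x j w) := by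
  funext i
  match i with
  | 0 => simp [Function.update]
  | 1 => simp [Function.update]
  | (i+2) =>
    simp only [Function.update, tprep_add_two]
    by_cases h : i = j
    · subst h; simp
    · rw [dif_neg (by omega), dif_neg (by omega)]

lemma update_tprep_zero (u v : g) (x : ℕ → g) (w : g) :
    Function.update (tprep u v x) 0 w = tprep w v x := by
  funext i
  match i with
  | 0 => simp
  | 1 => simp [Function.update]
  | (i+2) => simp [Function.update]

lemma update_tprep_one (u v : g) (x : ℕ → g) (w : g) :
    Function.update (tprep u v x) 1 w = tprep u w x := by
  funext i
  match i with
  | 0 => simp [Function.update]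
  | 1 => simp
  | (i+2) => simp [Function.update]

lemma sum_Icc_shift {M : Type*} [AddCommMonoid M] (a c : ℕ) (f : ℕ → M) :
    ∑ j ∈ Icc a c, f j = ∑ i ∈ range (c + 1 - a), f (a + i) := by
  rw [← Finset.Ico_add_one_right_eq_Icc, Finset.sum_Ico_eq_sum_range]

end Aux

section Core

variable {K : Type*} [Field K] {g V : Type*} [AddCommGroup g] [Module K g]
  [AddCommGroup V] [Module K V]
  (ρ : g →ₗ[K] g →ₗ[K] Module.End K V) (b : g →ₗ[K] g →ₗ[K] g →ₗ[K] g)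

/-- The Lie-derivative-type operator along the pair `(u,v)`, on cochains depending on
the first `N` entries. -/
def tL (N : ℕ) (u v : g) (ω : (ℕ → g) → V) : (ℕ → g) → V :=
  fun x => ρ u v (ω x) - ∑ j ∈ range N, ω (Function.update x j (b u v (x j)))

lemma coboundary_succ_eval (n : ℕ) (ω : (ℕ → g) → V) (x : ℕ → g) :
    coboundary ρ b (n+1) ω x =
      ((-1 : ℤ) ^ n) • ρ (x (2*n+2)) (x (2*n)) (ω (removePair (2*n) (2*n+2) x))
      + ((-1 : ℤ) ^ n) • ρ (x (2*n+1)) (x (2*n+2)) (ω (removePair (2*n+1) (2*n+2) x))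
      + ∑ k ∈ range (n+1),
          ((-1 : ℤ) ^ k) • ρ (x (2*k)) (x (2*k+1)) (ω (removePair (2*k) (2*k+1) x))
      + ∑ k ∈ range (n+1), ∑ j ∈ Icc (2*k+2) (2*n+2),
          ((-1 : ℤ) ^ (k+1)) •
            ω (removePair (2*k) (2*k+1)
                (Function.update x j (b (x (2*k)) (x (2*k+1)) (x j)))) := by
  have h1 : 2*(n+1) = 2*n+2 := by ring
  have h2 : 2*(n+1)-2 = 2*n := by omega
  have h3 : 2*(n+1)-1 = 2*n+1 := by omega
  have h4 : (-1 : ℤ)^(n+1+1) = (-1)^n := by rw [pow_succ, pow_succ]; ring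
  have h2' : 2*n+2-2 = 2*n := by omega
  have h3' : 2*n+2-1 = 2*n+1 := by omega
  simp only [coboundary, h1, h2, h3, h4, h2', h3']

lemma coboundary_congr {n : ℕ} {ω₁ ω₂ : (ℕ → g) → V} (h : ∀ y, ω₁ y = ω₂ y) (x : ℕ → g) :
    coboundary ρ b n ω₁ x = coboundary ρ b n ω₂ x := by
  have : ω₁ = ω₂ := funext h
  rw [this]

lemma coboundary_add (n : ℕ) (ω₁ ω₂ : (ℕ → g) → V) (x : ℕ → g) :
    coboundary ρ b n (fun y => ω₁ y + ω₂ y) x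
      = coboundary ρ b n ω₁ x + coboundary ρ b n ω₂ x := by
  simp only [coboundary, map_add, smul_add, Finset.sum_add_distrib]
  abel

lemma coboundary_sub (n : ℕ) (ω₁ ω₂ : (ℕ → g) → V) (x : ℕ → g) :
    coboundary ρ b n (fun y => ω₁ y - ω₂ y) x
      = coboundary ρ b n ω₁ x - coboundary ρ b n ω₂ x := by
  simp only [coboundary, map_sub, smul_sub, Finset.sum_sub_distrib]
  abel

lemma coboundary_neg (n : ℕ) (ω₁ : (ℕ → g) → V) (x : ℕ → g) :
    coboundary ρ b n (fun y => - ω₁ y) x = - coboundary ρ b n ω₁ x := by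
  simp only [coboundary, map_neg, smul_neg, Finset.sum_neg_distrib]
  abel

lemma tL_sub (N : ℕ) (u v : g) (ω₁ ω₂ : (ℕ → g) → V) (x : ℕ → g) :
    tL ρ b N u v (fun y => ω₁ y - ω₂ y) x = tL ρ b N u v ω₁ x - tL ρ b N u v ω₂ x := by
  simp only [tL, map_sub, Finset.sum_sub_distrib]
  abel

/-- Cartan-type formula: contracting the coboundary at level `m+2`. -/
lemma cartan (m : ℕ) (ω : (ℕ → g) → V) (u v : g) (x : ℕ → g) :
    coboundary ρ b (m+2) ω (tprep u v x)
      = tL ρ b (2*m+3) u v ω x - coboundary ρ b (m+1) (fun y => ω (tprep u v y)) x := by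
  rw [coboundary_succ_eval ρ b (m+1) ω (tprep u v x),
      coboundary_succ_eval ρ b m (fun y => ω (tprep u v y)) x]
  simp only [tL]
  rw [show 2*(m+1)+2 = (2*m+2)+2 from by ring,
      show 2*(m+1)+1 = (2*m+1)+2 from by ring,
      show 2*(m+1) = (2*m)+2 from by ring]
  simp only [tprep_add_two, removePair_tprep]
  -- peel k = 0 from the two k-sums
  have hC := Finset.sum_range_succ'
    (fun k => ((-1 : ℤ) ^ k) •
      ρ (tprep u v x (2*k)) (tprep u v x (2*k+1))
        (ω (removePair (2*k) (2*k+1) (tprep u v x)))) (m+1)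
  have hD := Finset.sum_range_succ'
    (fun k => ∑ j ∈ Icc (2*k+2) ((2*m+2)+2),
      ((-1 : ℤ) ^ (k+1)) •
        ω (removePair (2*k) (2*k+1)
            (Function.update (tprep u v x) j
              (b (tprep u v x (2*k)) (tprep u v x (2*k+1)) (tprep u v x j))))) (m+1)
  rw [hC, hD]
  clear hC hD
  -- normalize the k = 0 term of the C-sum
  have hC0 : ((-1 : ℤ) ^ (0:ℕ)) •
      ρ (tprep u v x (2*0)) (tprep u v x (2*0+1))
        (ω (removePair (2*0) (2*0+1) (tprep u v x))) = ρ u v (ω x) := by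
    norm_num [removePair01_tprep]
  rw [hC0]; clear hC0
  -- normalize the k = 0 term of the D-sum
  have hD0 : (∑ j ∈ Icc (2*0+2) ((2*m+2)+2),
      ((-1 : ℤ) ^ ((0:ℕ)+1)) •
        ω (removePair (2*0) (2*0+1)
            (Function.update (tprep u v x) j
              (b (tprep u v x (2*0)) (tprep u v x (2*0+1)) (tprep u v x j)))))
      = - ∑ j ∈ range (2*m+3), ω (Function.update x j (b u v (x j))) := by
    rw [show 2*0+2 = 2 from by norm_num, sum_Icc_shift]
    rw [show (2*m+2)+2+1-2 = 2*m+3 from by omega]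
    rw [← Finset.sum_neg_distrib]
    refine Finset.sum_congr rfl (fun i _ => ?_)
    rw [show 2+i = i+2 from by ring]
    simp only [pow_one, pow_zero, tprep_add_two, tprep_zero, tprep_one,
      Nat.mul_zero, Nat.zero_add, update_tprep, removePair01_tprep]
    rw [neg_one_zsmul]
  rw [hD0]; clear hD0
  -- normalize the shifted C-sum
  have hC1 : (∑ k ∈ range (m+1), ((-1 : ℤ) ^ (k+1)) •
      ρ (tprep u v x (2*(k+1))) (tprep u v x (2*(k+1)+1))
        (ω (removePair (2*(k+1)) (2*(k+1)+1) (tprep u v x))))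
      = - ∑ k ∈ range (m+1), ((-1 : ℤ) ^ k) •
          ρ (x (2*k)) (x (2*k+1))
            ((fun y => ω (tprep u v y)) (removePair (2*k) (2*k+1) x)) := by
    rw [← Finset.sum_neg_distrib]
    refine Finset.sum_congr rfl (fun k _ => ?_)
    rw [show 2*(k+1)+1 = (2*k+1)+2 from by ring, show 2*(k+1) = (2*k)+2 from by ring]
    rw [show (2*k)+2 = (2*k)+2 from rfl]
    simp only [tprep_add_two, removePair_tprep]
    rw [pow_succ, mul_smul, neg_one_zsmul, smul_neg]
  rw [hC1]; clear hC1
  -- normalize the shifted D-sum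
  have hD1 : (∑ k ∈ range (m+1), ∑ j ∈ Icc (2*(k+1)+2) ((2*m+2)+2),
      ((-1 : ℤ) ^ ((k+1)+1)) •
        ω (removePair (2*(k+1)) (2*(k+1)+1)
            (Function.update (tprep u v x) j
              (b (tprep u v x (2*(k+1))) (tprep u v x (2*(k+1)+1)) (tprep u v x j)))))
      = - ∑ k ∈ range (m+1), ∑ j ∈ Icc (2*k+2) (2*m+2),
          ((-1 : ℤ) ^ (k+1)) •
            (fun y => ω (tprep u v y))
              (removePair (2*k) (2*k+1)
                (Function.update x j (b (x (2*k)) (x (2*k+1)) (x j)))) := by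
    rw [← Finset.sum_neg_distrib]
    refine Finset.sum_congr rfl (fun k _ => ?_)
    rw [show 2*(k+1)+1 = (2*k+1)+2 from by ring, show 2*(k+1)+2 = ((2*k+2))+2 from by ring,
        show 2*(k+1) = (2*k)+2 from by ring]
    rw [sum_Icc_shift, sum_Icc_shift]
    rw [show (2*m+2)+2+1-((2*k+2)+2) = 2*m+2+1-(2*k+2) from by omega]
    rw [← Finset.sum_neg_distrib]
    refine Finset.sum_congr rfl (fun i _ => ?_)
    rw [show (2*k+2)+2+i = ((2*k+2)+i)+2 from by ring]
    simp only [tprep_add_two, update_tprep, removePair_tprep]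
    rw [pow_succ ((-1:ℤ)) (k+1), mul_smul, neg_one_zsmul, smul_neg]
  rw [hD1]; clear hD1
  -- signs of the A, B terms
  rw [show ((-1:ℤ)^(m+1)) = -(-1)^m from by rw [pow_succ]; ring]
  simp only [neg_smul]
  abel

end Core

section Core2

variable {K : Type*} [Field K] {g V : Type*} [AddCommGroup g] [Module K g]
  [AddCommGroup V] [Module K V]
  (ρ : g →ₗ[K] g →ₗ[K] Module.End K V) (b : g →ₗ[K] g →ₗ[K] g →ₗ[K] g)

/-- Contraction of the Lie-derivative-type operator. -/
lemma tL_tprep (N : ℕ) (u v a c : g) (ω : (ℕ → g) → V) (z : ℕ → g) :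
    tL ρ b (N+2) u v ω (tprep a c z)
      = tL ρ b N u v (fun y => ω (tprep a c y)) z
        - ω (tprep (b u v a) c z) - ω (tprep a (b u v c) z) := by
  simp only [tL]
  have h1 := Finset.sum_range_succ'
    (fun j => ω (Function.update (tprep a c z) j (b u v (tprep a c z j)))) (N+1)
  have h2 := Finset.sum_range_succ'
    (fun j => ω (Function.update (tprep a c z) (j+1) (b u v (tprep a c z (j+1))))) N
  rw [h1, h2]
  clear h1 h2
  have e0 : ω (Function.update (tprep a c z) 0 (b u v (tprep a c z 0)))
      = ω (tprep (b u v a) c z) := by rw [tprep_zero, update_tprep_zero]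
  have e1 : ω (Function.update (tprep a c z) (0+1) (b u v (tprep a c z (0+1))))
      = ω (tprep a (b u v c) z) := by
    norm_num [update_tprep_one]
  rw [e0, e1]
  have e2 : ∀ j ∈ range N,
      ω (Function.update (tprep a c z) (j+1+1) (b u v (tprep a c z (j+1+1))))
        = ω (tprep a c (Function.update z j (b u v (z j)))) := by
    intro j _
    rw [show j+1+1 = j+2 from rfl, tprep_add_two, update_tprep]
  rw [Finset.sum_congr rfl e2]
  abel

/-- The operators `tL` form a Leibniz-type bracket relation. -/
lemma tLL (hfi : ∀ x₁ x₂ y₁ y₂ y₃, b x₁ x₂ (b y₁ y₂ y₃)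
      = b (b x₁ x₂ y₁) y₂ y₃ + b y₁ (b x₁ x₂ y₂) y₃ + b y₁ y₂ (b x₁ x₂ y₃))
    (hR1 : ∀ x₁ x₂ y₁ y₂ : g,
      ρ x₁ x₂ * ρ y₁ y₂ - ρ y₁ y₂ * ρ x₁ x₂ = ρ (b x₁ x₂ y₁) y₂ + ρ y₁ (b x₁ x₂ y₂))
    (N : ℕ) (ω : (ℕ → g) → V)
    (hadd : ∀ (x : ℕ → g) (j : ℕ), j < N → ∀ p q : g,
      ω (Function.update x j (p + q))
        = ω (Function.update x j p) + ω (Function.update x j q))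
    (u v a c : g) (x : ℕ → g) :
    tL ρ b N u v (tL ρ b N a c ω) x
      = tL ρ b N a c (tL ρ b N u v ω) x
        + tL ρ b N (b u v a) c ω x + tL ρ b N a (b u v c) ω x := by
  have hρ : ∀ w : V, ρ u v (ρ a c w)
      = ρ a c (ρ u v w) + (ρ (b u v a) c w + ρ a (b u v c) w) := by
    intro w
    have h := congrArg (fun T : Module.End K V => T w) (hR1 u v a c)
    simp only [LinearMap.sub_apply, LinearMap.add_apply, Module.End.mul_apply] at h
    have := eq_add_of_sub_eq h
    rw [this]; abel
  have key : (∑ j ∈ range N, ∑ l ∈ range N,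
        ω (Function.update (Function.update x j (b u v (x j))) l
            (b a c (Function.update x j (b u v (x j)) l))))
      = (∑ j ∈ range N, ∑ l ∈ range N,
          ω (Function.update (Function.update x j (b a c (x j))) l
              (b u v (Function.update x j (b a c (x j)) l))))
        + ((- ∑ j ∈ range N, ω (Function.update x j (b (b u v a) c (x j))))
          - ∑ j ∈ range N, ω (Function.update x j (b a (b u v c) (x j)))) := by
    refine eq_add_of_sub_eq' ?_
    rw [Finset.sum_comm (f := fun j l =>
        ω (Function.update (Function.update x j (b u v (x j))) l
            (b a c (Function.update x j (b u v (x j)) l))))]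
    rw [← Finset.sum_sub_distrib]
    have hptwise : ∀ j ∈ range N,
        ((∑ l ∈ range N,
          ω (Function.update (Function.update x l (b u v (x l))) j
              (b a c (Function.update x l (b u v (x l)) j))))
        - ∑ l ∈ range N,
            ω (Function.update (Function.update x j (b a c (x j))) l
                (b u v (Function.update x j (b a c (x j)) l))))
        = ω (Function.update x j (b a c (b u v (x j))))
          - ω (Function.update x j (b u v (b a c (x j)))) := by
      intro j hj
      rw [← Finset.sum_sub_distrib]
      have hinner : ∀ l ∈ range N,
          (ω (Function.update (Function.update x l (b u v (x l))) j
              (b a c (Function.update x l (b u v (x l)) j)))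
          - ω (Function.update (Function.update x j (b a c (x j))) l
              (b u v (Function.update x j (b a c (x j)) l))))
          = if l = j then
              (ω (Function.update x j (b a c (b u v (x j))))
                - ω (Function.update x j (b u v (b a c (x j))))) else 0 := by
        intro l _
        by_cases h : l = j
        · subst h
          rw [if_pos rfl, Function.update_self, Function.update_self,
              Function.update_idem, Function.update_idem]
        · rw [if_neg h, Function.update_of_ne (by exact fun hc => h hc.symm),
              Function.update_of_ne h, Function.update_comm h]
          rw [Function.update_comm (fun hc => h hc.symm)]
          abel
      rw [Finset.sum_congr rfl hinner, Finset.sum_ite_eq' (range N) j]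
      rw [if_pos hj]
    rw [Finset.sum_congr rfl hptwise]
    rw [Finset.sum_sub_distrib]
    have hfi' : ∀ j ∈ range N,
        ω (Function.update x j (b u v (b a c (x j))))
          = ω (Function.update x j (b (b u v a) c (x j)))
            + ω (Function.update x j (b a (b u v c) (x j)))
            + ω (Function.update x j (b a c (b u v (x j)))) := by
      intro j hj
      rw [hfi u v a c (x j),
          hadd x j (mem_range.mp hj) (b (b u v a) c (x j) + b a (b u v c) (x j))
            (b a c (b u v (x j))),
          hadd x j (mem_range.mp hj) (b (b u v a) c (x j)) (b a (b u v c) (x j))]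
    rw [Finset.sum_congr rfl hfi']
    rw [Finset.sum_add_distrib, Finset.sum_add_distrib]
    abel
  simp only [tL, map_sub, map_sum, Finset.sum_sub_distrib]
  rw [hρ (ω x), key]
  abel

end Core2

section Base

variable {K : Type*} [Field K] {g V : Type*} [AddCommGroup g] [Module K g]
  [AddCommGroup V] [Module K V]
  (ρ : g →ₗ[K] g →ₗ[K] Module.End K V) (b : g →ₗ[K] g →ₗ[K] g →ₗ[K] g)

lemma coboundary_one_eval (η : (ℕ → g) → V)
    (hdep1 : ∀ x y : ℕ → g, x 0 = y 0 → η x = η y) (x : ℕ → g) :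
    coboundary ρ b 1 η x
      = ρ (x 2) (x 0) (η (fun _ => x 1)) + ρ (x 1) (x 2) (η (fun _ => x 0))
        + ρ (x 0) (x 1) (η (fun _ => x 2)) - η (fun _ => b (x 0) (x 1) (x 2)) := by
  have e1 : η (removePair 0 2 x) = η (fun _ => x 1) := hdep1 _ _ (by simp [removePair])
  have e2 : η (removePair 1 2 x) = η (fun _ => x 0) := hdep1 _ _ (by simp [removePair])
  have e3 : η (removePair 0 1 x) = η (fun _ => x 2) := hdep1 _ _ (by simp [removePair])
  have e4 : η (removePair 0 1 (Function.update x 2 (b (x 0) (x 1) (x 2))))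
      = η (fun _ => b (x 0) (x 1) (x 2)) :=
    hdep1 _ _ (by simp [removePair, Function.update_apply])
  simp only [coboundary]
  norm_num [e1, e2, e3, e4, Finset.sum_range_one, Finset.Icc_self, Finset.sum_singleton]
  abel

lemma d1_rho_zero
    (hR2 : ∀ x₁ y₁ y₂ y₃ : g,
      ρ x₁ (b y₁ y₂ y₃) = ρ y₂ y₃ * ρ x₁ y₁ + ρ y₃ y₁ * ρ x₁ y₂ + ρ y₁ y₂ * ρ x₁ y₃)
    (a : g) (w : V) (x : ℕ → g) :
    coboundary ρ b 1 (fun y => ρ a (y 0) w) x = 0 := by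
  rw [coboundary_one_eval ρ b (fun y => ρ a (y 0) w)
      (fun y y' h => by simp only [h]) x]
  have h := congrArg (fun T : Module.End K V => T w) (hR2 a (x 0) (x 1) (x 2))
  simp only [LinearMap.add_apply, Module.End.mul_apply] at h
  simp only []
  rw [h]; abel

lemma d1_rho_zero'
    (hρskew : ∀ p q : g, ρ p q = - ρ q p)
    (hR2 : ∀ x₁ y₁ y₂ y₃ : g,
      ρ x₁ (b y₁ y₂ y₃) = ρ y₂ y₃ * ρ x₁ y₁ + ρ y₃ y₁ * ρ x₁ y₂ + ρ y₁ y₂ * ρ x₁ y₃)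
    (a : g) (w : V) (x : ℕ → g) :
    coboundary ρ b 1 (fun y => ρ (y 0) a w) x = 0 := by
  have hc : ∀ y : ℕ → g, ρ (y 0) a w = -(ρ a (y 0) w) := by
    intro y; rw [hρskew (y 0) a]; simp
  rw [coboundary_congr ρ b hc x, coboundary_neg, d1_rho_zero ρ b hR2 a w x, neg_zero]

lemma ict_coboundary_one (η : (ℕ → g) → V)
    (hdep1 : ∀ x y : ℕ → g, x 0 = y 0 → η x = η y) (u v : g) (z : ℕ → g) :
    coboundary ρ b 1 η (tprep u v z)
      = tL ρ b 1 u v η z + ρ (z 0) u (η (fun _ => v)) + ρ v (z 0) (η (fun _ => u)) := by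
  rw [coboundary_one_eval ρ b η hdep1 (tprep u v z)]
  have htL : tL ρ b 1 u v η z = ρ u v (η (fun _ => z 0)) - η (fun _ => b u v (z 0)) := by
    simp only [tL, Finset.sum_range_one]
    rw [hdep1 z (fun _ => z 0) rfl,
        hdep1 (Function.update z 0 (b u v (z 0))) (fun _ => b u v (z 0)) (by simp)]
  rw [htL]
  simp only [tprep_zero, tprep_one, show tprep u v z 2 = z 0 from rfl]
  abel

lemma Ld_base
    (hfi : ∀ x₁ x₂ y₁ y₂ y₃, b x₁ x₂ (b y₁ y₂ y₃)
      = b (b x₁ x₂ y₁) y₂ y₃ + b y₁ (b x₁ x₂ y₂) y₃ + b y₁ y₂ (b x₁ x₂ y₃))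
    (hR1 : ∀ x₁ x₂ y₁ y₂ : g,
      ρ x₁ x₂ * ρ y₁ y₂ - ρ y₁ y₂ * ρ x₁ x₂ = ρ (b x₁ x₂ y₁) y₂ + ρ y₁ (b x₁ x₂ y₂))
    (ω : (ℕ → g) → V)
    (hdep1 : ∀ x y : ℕ → g, x 0 = y 0 → ω x = ω y)
    (haddf : ∀ p q : g, ω (fun _ => p + q) = ω (fun _ => p) + ω (fun _ => q))
    (u v : g) (x : ℕ → g) :
    tL ρ b 3 u v (coboundary ρ b 1 ω) x = coboundary ρ b 1 (tL ρ b 1 u v ω) x := by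
  have h12 : ∀ (p q : g) (w : V), ρ u v (ρ p q w)
      = ρ p q (ρ u v w) + (ρ (b u v p) q w + ρ p (b u v q) w) := by
    intro p q w
    have h := congrArg (fun T : Module.End K V => T w) (hR1 u v p q)
    simp only [LinearMap.sub_apply, LinearMap.add_apply, Module.End.mul_apply] at h
    rw [eq_add_of_sub_eq h]; abel
  have hdept : ∀ y y' : ℕ → g, y 0 = y' 0 → tL ρ b 1 u v ω y = tL ρ b 1 u v ω y' := by
    intro y y' h
    simp only [tL, Finset.sum_range_one]
    rw [hdep1 y y' h, hdep1 (Function.update y 0 (b u v (y 0)))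
        (Function.update y' 0 (b u v (y' 0))) (by simp [h])]
  rw [coboundary_one_eval ρ b _ hdept x]
  have htLc : ∀ z : g, tL ρ b 1 u v ω (fun _ => z)
      = ρ u v (ω (fun _ => z)) - ω (fun _ => b u v z) := by
    intro z
    simp only [tL, Finset.sum_range_one]
    rw [hdep1 (Function.update (fun _ => z) 0 (b u v ((fun _ => z) 0)))
        (fun _ => b u v z) (by simp)]
  rw [htLc (x 1), htLc (x 0), htLc (x 2), htLc (b (x 0) (x 1) (x 2))]
  simp only [tL]
  rw [show (3:ℕ) = 2+1 from rfl, Finset.sum_range_succ, Finset.sum_range_succ,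
      Finset.sum_range_one]
  rw [coboundary_one_eval ρ b ω hdep1 x,
      coboundary_one_eval ρ b ω hdep1 (Function.update x 0 (b u v (x 0))),
      coboundary_one_eval ρ b ω hdep1 (Function.update x 1 (b u v (x 1))),
      coboundary_one_eval ρ b ω hdep1 (Function.update x 2 (b u v (x 2)))]
  simp only [Function.update_apply]
  norm_num
  rw [h12 (x 2) (x 0) (ω (fun _ => x 1)), h12 (x 1) (x 2) (ω (fun _ => x 0)),
      h12 (x 0) (x 1) (ω (fun _ => x 2))]
  have hfi' : ω (fun _ => b u v (b (x 0) (x 1) (x 2)))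
      = ω (fun _ => b (b u v (x 0)) (x 1) (x 2)) + ω (fun _ => b (x 0) (b u v (x 1)) (x 2))
        + ω (fun _ => b (x 0) (x 1) (b u v (x 2))) := by
    rw [hfi u v (x 0) (x 1) (x 2), haddf, haddf]
  rw [hfi']
  abel

end Base

section Assemble

variable {K : Type*} [Field K] {g V : Type*} [AddCommGroup g] [Module K g]
  [AddCommGroup V] [Module K V]
  (ρ : g →ₗ[K] g →ₗ[K] Module.End K V) (b : g →ₗ[K] g →ₗ[K] g →ₗ[K] g)

lemma tL_congr {N : ℕ} {u v : g} {ω₁ ω₂ : (ℕ → g) → V} (h : ∀ y, ω₁ y = ω₂ y) (x : ℕ → g) :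
    tL ρ b N u v ω₁ x = tL ρ b N u v ω₂ x := by
  have : ω₁ = ω₂ := funext h
  rw [this]

lemma tprep_hdep {N : ℕ} {ω : (ℕ → g) → V} (u v : g)
    (hdep : ∀ x y : ℕ → g, (∀ i < N+2, x i = y i) → ω x = ω y) :
    ∀ x y : ℕ → g, (∀ i < N, x i = y i) → ω (tprep u v x) = ω (tprep u v y) := by
  intro x y h
  apply hdep
  intro i hi
  match i with
  | 0 => rfl
  | 1 => rfl
  | (j+2) => simpa using h j (by omega)

lemma tprep_hadd {N : ℕ} {ω : (ℕ → g) → V} (u v : g)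
    (hadd : ∀ (x : ℕ → g) (j : ℕ), j < N+2 → ∀ p q : g,
      ω (Function.update x j (p+q))
        = ω (Function.update x j p) + ω (Function.update x j q)) :
    ∀ (x : ℕ → g) (j : ℕ), j < N → ∀ p q : g,
      ω (tprep u v (Function.update x j (p+q)))
        = ω (tprep u v (Function.update x j p)) + ω (tprep u v (Function.update x j q)) := by
  intro x j hj p q
  rw [← update_tprep, ← update_tprep, ← update_tprep]
  exact hadd _ (j+2) (by omega) p q

/-- `[L_{u,v}, d] = 0`. -/
lemma Ld
    (hfi : ∀ x₁ x₂ y₁ y₂ y₃, b x₁ x₂ (b y₁ y₂ y₃)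
      = b (b x₁ x₂ y₁) y₂ y₃ + b y₁ (b x₁ x₂ y₂) y₃ + b y₁ y₂ (b x₁ x₂ y₃))
    (hR1 : ∀ x₁ x₂ y₁ y₂ : g,
      ρ x₁ x₂ * ρ y₁ y₂ - ρ y₁ y₂ * ρ x₁ x₂ = ρ (b x₁ x₂ y₁) y₂ + ρ y₁ (b x₁ x₂ y₂)) :
    ∀ (m : ℕ) (ω : (ℕ → g) → V),
      (∀ x y : ℕ → g, (∀ i < 2*m+1, x i = y i) → ω x = ω y) →
      (∀ (x : ℕ → g) (j : ℕ), j < 2*m+1 → ∀ p q : g,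
        ω (Function.update x j (p+q))
          = ω (Function.update x j p) + ω (Function.update x j q)) →
      ∀ (u v : g) (x : ℕ → g),
        tL ρ b (2*m+3) u v (coboundary ρ b (m+1) ω) x
          = coboundary ρ b (m+1) (tL ρ b (2*m+1) u v ω) x := by
  intro m
  induction m with
  | zero =>
    intro ω hdep hadd u v x
    have hdep1 : ∀ x y : ℕ → g, x 0 = y 0 → ω x = ω y := by
      intro x y h
      refine hdep x y ?_
      intro i hi
      have : i = 0 := by omega
      subst this; exact h
    have haddf : ∀ p q : g, ω (fun _ => p+q) = ω (fun _ => p) + ω (fun _ => q) := by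
      intro p q
      have h0 : ∀ r : g, ω (fun _ => r) = ω (Function.update (fun _ => (0:g)) 0 r) := by
        intro r; exact hdep1 _ _ (by simp)
      rw [h0, h0, h0, hadd (fun _ => (0:g)) 0 (by omega) p q]
    exact Ld_base ρ b hfi hR1 ω hdep1 haddf u v x
  | succ m ih =>
    intro ω hdep hadd u v x
    show tL ρ b (2*m+5) u v (coboundary ρ b (m+2) ω) x
      = coboundary ρ b (m+2) (tL ρ b (2*m+3) u v ω) x
    rw [← tprep_reconstruct x]
    suffices h : ∀ (a c : g) (z : ℕ → g),
        tL ρ b (2*m+5) u v (coboundary ρ b (m+2) ω) (tprep a c z)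
          = coboundary ρ b (m+2) (tL ρ b (2*m+3) u v ω) (tprep a c z) by
      exact h _ _ _
    intro a c z
    have hdep2 : ∀ x y : ℕ → g, (∀ i < (2*m+1)+2, x i = y i) → ω x = ω y := hdep
    have hadd2 : ∀ (x : ℕ → g) (j : ℕ), j < (2*m+1)+2 → ∀ p q : g,
        ω (Function.update x j (p+q))
          = ω (Function.update x j p) + ω (Function.update x j q) := hadd
    have hdepI := tprep_hdep (N := 2*m+1) a c hdep2
    have haddI := tprep_hadd (N := 2*m+1) a c hadd2
    have hadd3 : ∀ (x : ℕ → g) (j : ℕ), j < 2*m+3 → ∀ p q : g,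
        ω (Function.update x j (p+q))
          = ω (Function.update x j p) + ω (Function.update x j q) := hadd
    have hcart : ∀ (p q : g) (y : ℕ → g), coboundary ρ b (m+2) ω (tprep p q y)
        = tL ρ b (2*m+3) p q ω y
          - coboundary ρ b (m+1) (fun y' => ω (tprep p q y')) y :=
      fun p q y => cartan ρ b m ω p q y
    have hiL2 : tL ρ b (2*m+5) u v (coboundary ρ b (m+2) ω) (tprep a c z)
        = tL ρ b (2*m+3) u v (fun y => coboundary ρ b (m+2) ω (tprep a c y)) z
          - coboundary ρ b (m+2) ω (tprep (b u v a) c z)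
          - coboundary ρ b (m+2) ω (tprep a (b u v c) z) :=
      tL_tprep ρ b (2*m+3) u v a c (coboundary ρ b (m+2) ω) z
    rw [hiL2]
    have hsplit : tL ρ b (2*m+3) u v (fun y => coboundary ρ b (m+2) ω (tprep a c y)) z
        = tL ρ b (2*m+3) u v (tL ρ b (2*m+3) a c ω) z
          - tL ρ b (2*m+3) u v
              (coboundary ρ b (m+1) (fun y => ω (tprep a c y))) z := by
      rw [tL_congr ρ b (hcart a c) z]
      exact tL_sub ρ b (2*m+3) u v _ _ z
    rw [hsplit]
    rw [tLL ρ b hfi hR1 (2*m+3) ω hadd3 u v a c z]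
    have hIH : tL ρ b (2*m+3) u v (coboundary ρ b (m+1) (fun y => ω (tprep a c y))) z
        = coboundary ρ b (m+1) (tL ρ b (2*m+1) u v (fun y => ω (tprep a c y))) z :=
      ih (fun y => ω (tprep a c y)) hdepI haddI u v z
    rw [hIH]
    rw [hcart (b u v a) c z, hcart a (b u v c) z]
    have hcart2 : coboundary ρ b (m+2) (tL ρ b (2*m+3) u v ω) (tprep a c z)
        = tL ρ b (2*m+3) a c (tL ρ b (2*m+3) u v ω) z
          - coboundary ρ b (m+1)
              (fun y => tL ρ b (2*m+3) u v ω (tprep a c y)) z :=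
      cartan ρ b m (tL ρ b (2*m+3) u v ω) a c z
    rw [hcart2]
    have hiL : ∀ y, tL ρ b (2*m+3) u v ω (tprep a c y)
        = tL ρ b (2*m+1) u v (fun y' => ω (tprep a c y')) y
          - ω (tprep (b u v a) c y) - ω (tprep a (b u v c) y) :=
      fun y => tL_tprep ρ b (2*m+1) u v a c ω y
    have hsplit2 : coboundary ρ b (m+1)
          (fun y => tL ρ b (2*m+3) u v ω (tprep a c y)) z
        = coboundary ρ b (m+1)
            (tL ρ b (2*m+1) u v (fun y' => ω (tprep a c y'))) z
          - coboundary ρ b (m+1) (fun y => ω (tprep (b u v a) c y)) z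
          - coboundary ρ b (m+1) (fun y => ω (tprep a (b u v c) y)) z := by
      rw [coboundary_congr ρ b hiL z]
      rw [coboundary_sub ρ b (m+1)
          (fun y => tL ρ b (2*m+1) u v (fun y' => ω (tprep a c y')) y
            - ω (tprep (b u v a) c y))
          (fun y => ω (tprep a (b u v c) y)) z]
      rw [coboundary_sub ρ b (m+1)
          (tL ρ b (2*m+1) u v (fun y' => ω (tprep a c y')))
          (fun y => ω (tprep (b u v a) c y)) z]
    rw [hsplit2]
    abel

/-- `d ∘ d = 0`. -/
lemma DD
    (hfi : ∀ x₁ x₂ y₁ y₂ y₃, b x₁ x₂ (b y₁ y₂ y₃)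
      = b (b x₁ x₂ y₁) y₂ y₃ + b y₁ (b x₁ x₂ y₂) y₃ + b y₁ y₂ (b x₁ x₂ y₃))
    (hR1 : ∀ x₁ x₂ y₁ y₂ : g,
      ρ x₁ x₂ * ρ y₁ y₂ - ρ y₁ y₂ * ρ x₁ x₂ = ρ (b x₁ x₂ y₁) y₂ + ρ y₁ (b x₁ x₂ y₂))
    (hR2 : ∀ x₁ y₁ y₂ y₃ : g,
      ρ x₁ (b y₁ y₂ y₃) = ρ y₂ y₃ * ρ x₁ y₁ + ρ y₃ y₁ * ρ x₁ y₂ + ρ y₁ y₂ * ρ x₁ y₃)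
    (hρskew : ∀ p q : g, ρ p q = - ρ q p) :
    ∀ (n : ℕ) (ω : (ℕ → g) → V),
      (∀ x y : ℕ → g, (∀ i < 2*n+1, x i = y i) → ω x = ω y) →
      (∀ (x : ℕ → g) (j : ℕ), j < 2*n+1 → ∀ p q : g,
        ω (Function.update x j (p+q))
          = ω (Function.update x j p) + ω (Function.update x j q)) →
      ∀ x : ℕ → g, coboundary ρ b (n+2) (coboundary ρ b (n+1) ω) x = 0 := by
  intro n
  induction n with
  | zero =>
    intro ω hdep hadd x
    have hdep1 : ∀ x y : ℕ → g, x 0 = y 0 → ω x = ω y := by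
      intro x y h
      refine hdep x y ?_
      intro i hi
      have : i = 0 := by omega
      subst this; exact h
    show coboundary ρ b 2 (coboundary ρ b 1 ω) x = 0
    rw [← tprep_reconstruct x]
    suffices h : ∀ (a c : g) (z : ℕ → g),
        coboundary ρ b 2 (coboundary ρ b 1 ω) (tprep a c z) = 0 by exact h _ _ _
    intro a c z
    have hc : coboundary ρ b 2 (coboundary ρ b 1 ω) (tprep a c z)
        = tL ρ b 3 a c (coboundary ρ b 1 ω) z
          - coboundary ρ b 1 (fun y => coboundary ρ b 1 ω (tprep a c y)) z :=
      cartan ρ b 0 (coboundary ρ b 1 ω) a c z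
    rw [hc]
    have hLd : tL ρ b 3 a c (coboundary ρ b 1 ω) z
        = coboundary ρ b 1 (tL ρ b 1 a c ω) z :=
      Ld ρ b hfi hR1 0 ω hdep hadd a c z
    rw [hLd]
    have hict : ∀ y, coboundary ρ b 1 ω (tprep a c y)
        = tL ρ b 1 a c ω y + ρ (y 0) a (ω (fun _ => c)) + ρ c (y 0) (ω (fun _ => a)) :=
      fun y => ict_coboundary_one ρ b ω hdep1 a c y
    have hsplit : coboundary ρ b 1 (fun y => coboundary ρ b 1 ω (tprep a c y)) z
        = coboundary ρ b 1 (tL ρ b 1 a c ω) z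
          + coboundary ρ b 1 (fun y => ρ (y 0) a (ω (fun _ => c))) z
          + coboundary ρ b 1 (fun y => ρ c (y 0) (ω (fun _ => a))) z := by
      rw [coboundary_congr ρ b hict z]
      rw [coboundary_add ρ b 1
          (fun y => tL ρ b 1 a c ω y + ρ (y 0) a (ω (fun _ => c)))
          (fun y => ρ c (y 0) (ω (fun _ => a))) z]
      rw [coboundary_add ρ b 1 (tL ρ b 1 a c ω)
          (fun y => ρ (y 0) a (ω (fun _ => c))) z]
    rw [hsplit]
    rw [d1_rho_zero ρ b hR2 c (ω (fun _ => a)) z]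
    rw [d1_rho_zero' ρ b hρskew hR2 a (ω (fun _ => c)) z]
    abel
  | succ n ih =>
    intro ω hdep hadd x
    show coboundary ρ b (n+3) (coboundary ρ b (n+2) ω) x = 0
    rw [← tprep_reconstruct x]
    suffices h : ∀ (a c : g) (z : ℕ → g),
        coboundary ρ b (n+3) (coboundary ρ b (n+2) ω) (tprep a c z) = 0 by exact h _ _ _
    intro a c z
    have hdep2 : ∀ x y : ℕ → g, (∀ i < (2*n+1)+2, x i = y i) → ω x = ω y := hdep
    have hadd2 : ∀ (x : ℕ → g) (j : ℕ), j < (2*n+1)+2 → ∀ p q : g,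
        ω (Function.update x j (p+q))
          = ω (Function.update x j p) + ω (Function.update x j q) := hadd
    have hdepI := tprep_hdep (N := 2*n+1) a c hdep2
    have haddI := tprep_hadd (N := 2*n+1) a c hadd2
    have hc1 : coboundary ρ b (n+3) (coboundary ρ b (n+2) ω) (tprep a c z)
        = tL ρ b (2*n+5) a c (coboundary ρ b (n+2) ω) z
          - coboundary ρ b (n+2)
              (fun y => coboundary ρ b (n+2) ω (tprep a c y)) z :=
      cartan ρ b (n+1) (coboundary ρ b (n+2) ω) a c z
    rw [hc1]
    have hLd : tL ρ b (2*n+5) a c (coboundary ρ b (n+2) ω) z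
        = coboundary ρ b (n+2) (tL ρ b (2*n+3) a c ω) z :=
      Ld ρ b hfi hR1 (n+1) ω hdep hadd a c z
    rw [hLd]
    have hc2 : ∀ y, coboundary ρ b (n+2) ω (tprep a c y)
        = tL ρ b (2*n+3) a c ω y
          - coboundary ρ b (n+1) (fun y' => ω (tprep a c y')) y :=
      fun y => cartan ρ b n ω a c y
    have hsplit : coboundary ρ b (n+2)
          (fun y => coboundary ρ b (n+2) ω (tprep a c y)) z
        = coboundary ρ b (n+2) (tL ρ b (2*n+3) a c ω) z
          - coboundary ρ b (n+2)
              (coboundary ρ b (n+1) (fun y' => ω (tprep a c y'))) z := by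
      rw [coboundary_congr ρ b hc2 z]
      exact coboundary_sub ρ b (n+2) _ _ z
    rw [hsplit]
    have hih : coboundary ρ b (n+2)
        (coboundary ρ b (n+1) (fun y' => ω (tprep a c y'))) z = 0 :=
      ih (fun y' => ω (tprep a c y')) hdepI haddI z
    rw [hih]
    abel

end Assemble

/-- Theorem 2.3: for a 3-Lie algebra `g` and a representation `(V,ρ)`, the
coboundary operator of the generalized Chevalley–Eilenberg complex satisfies `d ∘ d = 0`:
for every alternating multilinear `(2n-1)`-cochain `ω` (with `n ≥ 1`),
`d_n (d_{n-1} ω) = 0`. -/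
theorem threeLie_coboundary_squared_zero
    {K : Type*} [Field K] {g V : Type*} [AddCommGroup g] [Module K g]
    [AddCommGroup V] [Module K V]
    (b : g →ₗ[K] g →ₗ[K] g →ₗ[K] g)
    (hb1 : ∀ x y z, b x y z = - b y x z)
    (hb2 : ∀ x y z, b x y z = - b x z y)
    (hfi : ∀ x₁ x₂ y₁ y₂ y₃, b x₁ x₂ (b y₁ y₂ y₃)
      = b (b x₁ x₂ y₁) y₂ y₃ + b y₁ (b x₁ x₂ y₂) y₃ + b y₁ y₂ (b x₁ x₂ y₃))
    (ρ : g →ₗ[K] g →ₗ[K] Module.End K V)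
    (hρskew : ∀ x y, ρ x y = - ρ y x)
    (hR1 : ∀ x₁ x₂ y₁ y₂ : g,
      ρ x₁ x₂ * ρ y₁ y₂ - ρ y₁ y₂ * ρ x₁ x₂ = ρ (b x₁ x₂ y₁) y₂ + ρ y₁ (b x₁ x₂ y₂))
    (hR2 : ∀ x₁ y₁ y₂ y₃ : g,
      ρ x₁ (b y₁ y₂ y₃) = ρ y₂ y₃ * ρ x₁ y₁ + ρ y₃ y₁ * ρ x₁ y₂ + ρ y₁ y₂ * ρ x₁ y₃)
    (n : ℕ) (hn : 1 ≤ n)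
    (ω : (ℕ → g) → V)
    -- ω depends only on its first 2n−1 entries:
    (hdep : ∀ x y : ℕ → g, (∀ i < 2 * n - 1, x i = y i) → ω x = ω y)
    -- ω is additive and homogeneous in each of its first 2n−1 entries:
    (hadd : ∀ (x : ℕ → g) (i : ℕ), i < 2 * n - 1 → ∀ u v : g,
      ω (Function.update x i (u + v)) = ω (Function.update x i u) + ω (Function.update x i v))
    (hsmul : ∀ (x : ℕ → g) (i : ℕ), i < 2 * n - 1 → ∀ (c : K) (u : g),
      ω (Function.update x i (c • u)) = c • ω (Function.update x i u))
    -- ω is alternating in its first 2n−1 entries: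
    (halt : ∀ (x : ℕ → g) (i j : ℕ), i < j → j < 2 * n - 1 → x i = x j → ω x = 0) :
    ∀ x : ℕ → g, coboundary ρ b (n + 1) (coboundary ρ b n ω) x = 0 := by
  
  obtain ⟨n', rfl⟩ : ∃ n', n = n' + 1 := ⟨n - 1, by omega⟩
  have hdep' : ∀ x y : ℕ → g, (∀ i < 2*n'+1, x i = y i) → ω x = ω y := by
    intro x y h
    exact hdep x y (fun i hi => h i (by omega))
  have hadd' : ∀ (x : ℕ → g) (j : ℕ), j < 2*n'+1 → ∀ p q : g,
      ω (Function.update x j (p+q))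
        = ω (Function.update x j p) + ω (Function.update x j q) := by
    intro x j hj p q
    exact hadd x j (by omega) p q
  intro x
  exact DD ρ b hfi hR1 hR2 hρskew n' ω hdep' hadd' x
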